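/- arXiv:2410.10069 — 5 statements merged into one kernel-verified Lean document; each statement's English description precedes it below -/
import Mathlib

section
/- Fix real numbers x, y > 1 and let z = xy/((x-1)(y-1)). If (n_k) and (m_l) are constant sequences of real numbers with values n and m respectively, then the double series S = sum over k>=1, l>=1 of (z - k*l)/(x^{n_k + l} * y^{k + m_l}) equals 0. -/
/-- The double series `S((n_k),(m_l))` from the paper (1-indexed `k,l` become `k+1,l+1`;
real exponents use `Real.rpow`). -/
noncomputable def S2 (x y : ℝ) (n m : ℕ → ℝ) : ℝ :=
  ∑' k : ℕ, ∑' l : ℕ,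
    (x * y / ((x - 1) * (y - 1)) - ((k : ℝ) + 1) * ((l : ℝ) + 1)) /
      (x ^ (n k + ((l : ℝ) + 1)) * y ^ (((k : ℝ) + 1) + m l))

lemma geom1 {r : ℝ} (h0 : 0 ≤ r) (h1 : r < 1) :
    HasSum (fun l : ℕ => r ^ (l + 1)) (r / (1 - r)) := by
  have := (hasSum_geometric_of_lt_one h0 h1).mul_left r
  simpa [pow_succ, mul_comm, div_eq_mul_inv] using this

lemma geom2 {r : ℝ} (h0 : 0 ≤ r) (h1 : r < 1) :
    HasSum (fun l : ℕ => ((l : ℝ) + 1) * r ^ (l + 1)) (r / (1 - r) ^ 2) := by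
  have hg : HasSum (fun l : ℕ => (l : ℝ) * r ^ l) (r / (1 - r) ^ 2) :=
    hasSum_coe_mul_geometric_of_norm_lt_one
      (by rwa [Real.norm_eq_abs, abs_of_nonneg h0])
  have := (hasSum_nat_add_iff (f := fun l : ℕ => (l : ℝ) * r ^ l) 1).mpr (by simpa using hg)
  convert this using 2 with l
  · rfl
  push_cast
  ring

/-- If both sequences are constant (with values `n` and `m`), the double series vanishes. -/
theorem stmt1 (x y : ℝ) (hx : 1 < x) (hy : 1 < y) (n m : ℝ) :
    S2 x y (fun _ => n) (fun _ => m) = 0 := by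
  have hx0 : (0:ℝ) < x := by linarith
  have hy0 : (0:ℝ) < y := by linarith
  have hx1 : x - 1 ≠ 0 := by intro h; linarith
  have hy1 : y - 1 ≠ 0 := by intro h; linarith
  have hxne : x ≠ 0 := ne_of_gt hx0
  have hyne : y ≠ 0 := ne_of_gt hy0
  set r : ℝ := x⁻¹ with hr
  set s : ℝ := y⁻¹ with hs
  have hr0 : 0 ≤ r := by positivity
  have hs0 : 0 ≤ s := by positivity
  have hr1 : r < 1 := by rw [hr, inv_lt_one_iff₀]; right; exact hx
  have hs1 : s < 1 := by rw [hs, inv_lt_one_iff₀]; right; exact hy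
  set z : ℝ := x * y / ((x - 1) * (y - 1)) with hz
  set c : ℝ := (x ^ n * y ^ m)⁻¹ with hc
  set A : ℝ := r / (1 - r) with hA
  set B : ℝ := r / (1 - r) ^ 2 with hB
  set A' : ℝ := s / (1 - s) with hA'
  set B' : ℝ := s / (1 - s) ^ 2 with hB'
  have hAx : A = (x - 1)⁻¹ := by
    rw [hA, hr]; field_simp
  have hBx : B = x / (x - 1) ^ 2 := by
    rw [hB, hr]
    rw [show (1 : ℝ) - x⁻¹ = (x - 1) / x by field_simp]
    rw [div_pow]
    field_simp
  have hAy : A' = (y - 1)⁻¹ := by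
    rw [hA', hs]; field_simp
  have hBy : B' = y / (y - 1) ^ 2 := by
    rw [hB', hs]
    rw [show (1 : ℝ) - y⁻¹ = (y - 1) / y by field_simp]
    rw [div_pow]
    field_simp
  -- rewrite each term
  have hterm : ∀ k l : ℕ,
      (z - ((k : ℝ) + 1) * ((l : ℝ) + 1)) /
        (x ^ (n + ((l : ℝ) + 1)) * y ^ (((k : ℝ) + 1) + m))
      = c * ((z - ((k : ℝ) + 1) * ((l : ℝ) + 1)) * r ^ (l + 1) * s ^ (k + 1)) := by
    intro k l
    rw [Real.rpow_add hx0, Real.rpow_add hy0,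
      show ((l : ℝ) + 1) = ((l + 1 : ℕ) : ℝ) by push_cast; ring,
      show ((k : ℝ) + 1) = ((k + 1 : ℕ) : ℝ) by push_cast; ring,
      Real.rpow_natCast, Real.rpow_natCast]
    rw [hc, hr, hs, inv_pow, inv_pow]
    have hxn : x ^ n ≠ 0 := (Real.rpow_pos_of_pos hx0 n).ne'
    have hym : y ^ m ≠ 0 := (Real.rpow_pos_of_pos hy0 m).ne'
    have hxl : (x : ℝ) ^ (l + 1) ≠ 0 := pow_ne_zero _ hxne
    have hyk : (y : ℝ) ^ (k + 1) ≠ 0 := pow_ne_zero _ hyne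
    rw [div_eq_mul_inv, mul_inv, mul_inv, mul_inv]
    ring
  -- inner sums
  have hinner : ∀ k : ℕ,
      HasSum (fun l : ℕ => c * ((z - ((k : ℝ) + 1) * ((l : ℝ) + 1)) * r ^ (l + 1) * s ^ (k + 1)))
        (c * ((z * A - ((k : ℝ) + 1) * B) * s ^ (k + 1))) := by
    intro k
    have h1 := (geom1 hr0 hr1).mul_left z
    have h2 := (geom2 hr0 hr1).mul_left ((k : ℝ) + 1)
    have h3 := h1.sub h2
    have heq : (fun l : ℕ => (z - ((k : ℝ) + 1) * ((l : ℝ) + 1)) * r ^ (l + 1))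
        = fun l : ℕ => z * r ^ (l + 1) - ((k : ℝ) + 1) * (((l : ℝ) + 1) * r ^ (l + 1)) := by
      funext l; ring
    rw [← hA, ← hB] at h3
    have h4 : HasSum (fun l : ℕ => (z - ((k : ℝ) + 1) * ((l : ℝ) + 1)) * r ^ (l + 1))
        (z * A - ((k : ℝ) + 1) * B) := by rw [heq]; exact h3
    exact (h4.mul_right (s ^ (k + 1))).mul_left c
  -- outer sum
  have houter : HasSum (fun k : ℕ => c * ((z * A - ((k : ℝ) + 1) * B) * s ^ (k + 1)))
      (c * ((z * A) * A' - B * B')) := by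
    have h1 := (geom1 hs0 hs1).mul_left (z * A)
    have h2 := (geom2 hs0 hs1).mul_left B
    have h3 := h1.sub h2
    rw [← hA', ← hB'] at h3
    have heq : (fun k : ℕ => (z * A - ((k : ℝ) + 1) * B) * s ^ (k + 1))
        = fun k : ℕ => (z * A) * s ^ (k + 1) - B * (((k : ℝ) + 1) * s ^ (k + 1)) := by
      funext k; ring
    have h4 : HasSum (fun k : ℕ => (z * A - ((k : ℝ) + 1) * B) * s ^ (k + 1))
        ((z * A) * A' - B * B') := by rw [heq]; exact h3
    exact h4.mul_left c
  have hzero : (z * A) * A' - B * B' = 0 := by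
    rw [hAx, hAy, hBx, hBy, hz]
    field_simp
    ring
  unfold S2
  have : ∀ k : ℕ, (∑' l : ℕ,
      (x * y / ((x - 1) * (y - 1)) - ((k : ℝ) + 1) * ((l : ℝ) + 1)) /
        (x ^ (n + ((l : ℝ) + 1)) * y ^ (((k : ℝ) + 1) + m)))
      = c * ((z * A - ((k : ℝ) + 1) * B) * s ^ (k + 1)) := by
    intro k
    rw [← hz]
    calc (∑' l : ℕ, (z - ((k : ℝ) + 1) * ((l : ℝ) + 1)) /
            (x ^ (n + ((l : ℝ) + 1)) * y ^ (((k : ℝ) + 1) + m)))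
        = ∑' l : ℕ, c * ((z - ((k : ℝ) + 1) * ((l : ℝ) + 1)) * r ^ (l + 1) * s ^ (k + 1)) := by
          exact tsum_congr (fun l => hterm k l)
      _ = c * ((z * A - ((k : ℝ) + 1) * B) * s ^ (k + 1)) := (hinner k).tsum_eq
  rw [tsum_congr this, houter.tsum_eq, hzero, mul_zero]
end

section
/- Fix real numbers x, y > 1 and let z = xy/((x-1)(y-1)). For any two non-decreasing sequences (n_k) and (m_l) of real numbers, the double series S = sum over k>=1, l>=1 of (z - k*l)/(x^{n_k+l} * y^{k+m_l}) is nonnegative; moreover it equals 0 if and only if both sequences are constant. -/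
open Finset

private lemma sumGeom {v : ℝ} (hv0 : 0 ≤ v) (hv1 : v < 1) :
    Summable fun k : ℕ => v ^ (k + 1) :=
  (summable_geometric_of_lt_one hv0 hv1).comp_injective Nat.succ_injective

private lemma sumGeom' {v : ℝ} (hv0 : 0 ≤ v) (hv1 : v < 1) :
    Summable fun k : ℕ => ((k : ℝ) + 1) * v ^ (k + 1) := by
  have h : Summable fun n : ℕ => (n : ℝ) ^ 1 * v ^ n :=
    summable_pow_mul_geometric_of_norm_lt_one 1
      (by rwa [Real.norm_eq_abs, abs_of_nonneg hv0])
  refine (h.comp_injective Nat.succ_injective).congr fun k => ?_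
  show (((k + 1 : ℕ)) : ℝ) ^ 1 * v ^ (k + 1) = ((k : ℝ) + 1) * v ^ (k + 1)
  push_cast; ring

private lemma sumAux {f : ℕ → ℝ} {C v : ℝ} (hv0 : 0 ≤ v) (hv1 : v < 1)
    (h0 : ∀ k, 0 ≤ f k) (hb : ∀ k, f k ≤ C) :
    Summable fun k => f k * v ^ (k + 1) :=
  Summable.of_nonneg_of_le (fun k => mul_nonneg (h0 k) (pow_nonneg hv0 _))
    (fun k => mul_le_mul_of_nonneg_right (hb k) (pow_nonneg hv0 _))
    ((sumGeom hv0 hv1).mul_left C)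

private lemma sumAux' {f : ℕ → ℝ} {C v : ℝ} (hv0 : 0 ≤ v) (hv1 : v < 1)
    (h0 : ∀ k, 0 ≤ f k) (hb : ∀ k, f k ≤ C) :
    Summable fun k : ℕ => ((k : ℝ) + 1) * (f k * v ^ (k + 1)) := by
  refine Summable.of_nonneg_of_le
    (fun k => mul_nonneg (by positivity) (mul_nonneg (h0 k) (pow_nonneg hv0 _)))
    (fun k => ?_) (((sumGeom' hv0 hv1)).mul_left C)
  calc ((k : ℝ) + 1) * (f k * v ^ (k + 1)) = f k * (((k : ℝ) + 1) * v ^ (k + 1)) := by ring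
    _ ≤ C * (((k : ℝ) + 1) * v ^ (k + 1)) :=
        mul_le_mul_of_nonneg_right (hb k) (by positivity)

/-- Abel-type rearrangement. -/
private lemma abelSum {f : ℕ → ℝ} {v : ℝ} (h0 : ∀ k, 0 ≤ f k) (hf : Antitone f)
    (hv0 : 0 ≤ v) (hv1 : v < 1) :
    ∑' k, f k * v ^ (k + 1)
      = (1 - v) * ∑' t, (∑ k ∈ Finset.range (t + 1), f k) * v ^ (t + 1) := by
  set F : ℕ → ℝ := fun t => ∑ k ∈ Finset.range (t + 1), f k with hFdef
  have hfle : ∀ k, f k ≤ f 0 := fun k => hf (Nat.zero_le k)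
  have hF0 : ∀ t, 0 ≤ F t := fun t => Finset.sum_nonneg fun k _ => h0 k
  have hFle : ∀ t, F t ≤ ((t : ℝ) + 1) * f 0 := by
    intro t
    calc F t ≤ ∑ _k ∈ Finset.range (t + 1), f 0 :=
          Finset.sum_le_sum fun k _ => hfle k
      _ = ((t : ℝ) + 1) * f 0 := by
          rw [Finset.sum_const, Finset.card_range, nsmul_eq_mul]; push_cast; ring
  have SF : Summable fun t => F t * v ^ (t + 1) := by
    refine Summable.of_nonneg_of_le (fun t => mul_nonneg (hF0 t) (pow_nonneg hv0 _))
      (fun t => ?_) ((sumGeom' hv0 hv1).mul_left (f 0))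
    calc F t * v ^ (t + 1) ≤ (((t : ℝ) + 1) * f 0) * v ^ (t + 1) :=
          mul_le_mul_of_nonneg_right (hFle t) (pow_nonneg hv0 _)
      _ = f 0 * (((t : ℝ) + 1) * v ^ (t + 1)) := by ring
  have S1 : Summable fun k => f k * v ^ (k + 1) := sumAux hv0 hv1 h0 hfle
  have Sshift : Summable fun t => F (t + 1) * v ^ (t + 2) :=
    SF.comp_injective Nat.succ_injective
  have Sv2 : Summable fun t => F t * v ^ (t + 2) :=
    (SF.mul_left v).congr fun t => by ring
  have hsplit : ∑' t, F t * v ^ (t + 1) = F 0 * v ^ 1 + ∑' t, F (t + 1) * v ^ (t + 2) :=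
    Summable.tsum_eq_zero_add SF
  have hLHS : ∑' k, f k * v ^ (k + 1) = f 0 * v ^ 1 + ∑' k, f (k + 1) * v ^ (k + 2) :=
    Summable.tsum_eq_zero_add S1
  have hstep : ∀ t : ℕ, F (t + 1) * v ^ (t + 2) - F t * v ^ (t + 2) = f (t + 1) * v ^ (t + 2) := by
    intro t
    have : F (t + 1) = F t + f (t + 1) := by
      simp [hFdef, Finset.sum_range_succ]
    rw [this]; ring
  have hF0v : F 0 = f 0 := by simp [hFdef]
  calc ∑' k, f k * v ^ (k + 1)
      = f 0 * v ^ 1 + ∑' k, f (k + 1) * v ^ (k + 2) := hLHS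
    _ = f 0 * v ^ 1 + ∑' t, (F (t + 1) * v ^ (t + 2) - F t * v ^ (t + 2)) := by
        rw [tsum_congr hstep]
    _ = f 0 * v ^ 1 + (∑' t, F (t + 1) * v ^ (t + 2) - ∑' t, F t * v ^ (t + 2)) := by
        rw [Summable.tsum_sub Sshift Sv2]
    _ = (F 0 * v ^ 1 + ∑' t, F (t + 1) * v ^ (t + 2)) - ∑' t, F t * v ^ (t + 2) := by
        rw [hF0v]; ring
    _ = ∑' t, F t * v ^ (t + 1) - ∑' t, F t * v ^ (t + 2) := by rw [← hsplit]
    _ = ∑' t, F t * v ^ (t + 1) - v * ∑' t, F t * v ^ (t + 1) := by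
        rw [← tsum_mul_left]
        congr 1
        exact tsum_congr fun t => by ring
    _ = (1 - v) * ∑' t, F t * v ^ (t + 1) := by ring

/-- For non-decreasing real sequences the double series is nonnegative, and vanishes
iff both sequences are constant. -/
theorem stmt2 (x y : ℝ) (hx : 1 < x) (hy : 1 < y) (n m : ℕ → ℝ)
    (hn : Monotone n) (hm : Monotone m) :
    0 ≤ S2 x y n m ∧
      (S2 x y n m = 0 ↔ ((∀ k, n k = n 0) ∧ (∀ l, m l = m 0))) := by
  have hx0 : (0 : ℝ) < x := lt_trans one_pos hx
  have hy0 : (0 : ℝ) < y := lt_trans one_pos hy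
  set u : ℝ := x⁻¹ with hu
  set w : ℝ := y⁻¹ with hw
  have hu0 : 0 < u := inv_pos.mpr hx0
  have hw0 : 0 < w := inv_pos.mpr hy0
  have hu1 : u < 1 := inv_lt_one_of_one_lt₀ hx
  have hw1 : w < 1 := inv_lt_one_of_one_lt₀ hy
  set a : ℕ → ℝ := fun k => (x ^ n k)⁻¹ with ha
  set b : ℕ → ℝ := fun l => (y ^ m l)⁻¹ with hb
  have ha0 : ∀ k, 0 < a k := fun k => inv_pos.mpr (Real.rpow_pos_of_pos hx0 _)
  have hb0 : ∀ l, 0 < b l := fun l => inv_pos.mpr (Real.rpow_pos_of_pos hy0 _)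
  have haAnti : Antitone a := fun i j hij =>
    inv_anti₀ (Real.rpow_pos_of_pos hx0 _)
      ((Real.rpow_le_rpow_left_iff hx).mpr (hn hij))
  have hbAnti : Antitone b := fun i j hij =>
    inv_anti₀ (Real.rpow_pos_of_pos hy0 _)
      ((Real.rpow_le_rpow_left_iff hy).mpr (hm hij))
  set z : ℝ := x * y / ((x - 1) * (y - 1)) with hz
  -- pointwise rewrite of the summand
  have hterm : ∀ k l : ℕ,
      (z - ((k : ℝ) + 1) * ((l : ℝ) + 1)) /
          (x ^ (n k + ((l : ℝ) + 1)) * y ^ (((k : ℝ) + 1) + m l))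
        = (z * (a k * w ^ (k + 1))) * (b l * u ^ (l + 1))
          - (((k : ℝ) + 1) * (a k * w ^ (k + 1))) * (((l : ℝ) + 1) * (b l * u ^ (l + 1))) := by
    intro k l
    have ecast1 : ((l : ℝ) + 1) = ((l + 1 : ℕ) : ℝ) := by push_cast; ring
    have ecast2 : ((k : ℝ) + 1) = ((k + 1 : ℕ) : ℝ) := by push_cast; ring
    have e1 : x ^ (n k + ((l : ℝ) + 1)) = x ^ n k * x ^ (l + 1) := by
      rw [Real.rpow_add hx0, ecast1, Real.rpow_natCast]
    have e2 : y ^ (((k : ℝ) + 1) + m l) = y ^ (k + 1) * y ^ m l := by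
      rw [Real.rpow_add hy0, ecast2, Real.rpow_natCast]
    have h1 : x ^ n k ≠ 0 := (Real.rpow_pos_of_pos hx0 _).ne'
    have h2 : (x : ℝ) ^ (l + 1) ≠ 0 := (pow_pos hx0 _).ne'
    have h3 : y ^ m l ≠ 0 := (Real.rpow_pos_of_pos hy0 _).ne'
    have h4 : (y : ℝ) ^ (k + 1) ≠ 0 := (pow_pos hy0 _).ne'
    have hx1 : x - 1 ≠ 0 := by linarith
    have hy1 : y - 1 ≠ 0 := by linarith
    rw [e1, e2, hz]
    simp only [ha, hb, hu, hw, inv_pow]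
    field_simp
  -- the four single series
  set G : ℕ → ℝ := fun l => b l * u ^ (l + 1) with hG
  set H : ℕ → ℝ := fun l : ℕ => ((l : ℝ) + 1) * (b l * u ^ (l + 1)) with hH
  set A : ℕ → ℝ := fun k => a k * w ^ (k + 1) with hA
  set A' : ℕ → ℝ := fun k : ℕ => ((k : ℝ) + 1) * (a k * w ^ (k + 1)) with hA'
  have hbub : ∀ l, b l ≤ b 0 := fun l => hbAnti (Nat.zero_le l)
  have haub : ∀ k, a k ≤ a 0 := fun k => haAnti (Nat.zero_le k)
  have sG : Summable G := sumAux hu0.le hu1 (fun l => (hb0 l).le) hbub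
  have sH : Summable H := sumAux' hu0.le hu1 (fun l => (hb0 l).le) hbub
  have sA : Summable A := sumAux hw0.le hw1 (fun k => (ha0 k).le) haub
  have sA' : Summable A' := sumAux' hw0.le hw1 (fun k => (ha0 k).le) haub
  -- evaluate the inner sums
  have hinner : ∀ k : ℕ,
      (∑' l : ℕ, (z - ((k : ℝ) + 1) * ((l : ℝ) + 1)) /
          (x ^ (n k + ((l : ℝ) + 1)) * y ^ (((k : ℝ) + 1) + m l)))
        = (z * A k) * (∑' l, G l) - (((k : ℝ) + 1) * A k) * (∑' l, H l) := by
    intro k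
    rw [tsum_congr (hterm k)]
    have : ∀ l : ℕ,
        (z * (a k * w ^ (k + 1))) * (b l * u ^ (l + 1))
          - (((k : ℝ) + 1) * (a k * w ^ (k + 1))) * (((l : ℝ) + 1) * (b l * u ^ (l + 1)))
        = (z * A k) * G l - (((k : ℝ) + 1) * A k) * H l := fun l => rfl
    rw [tsum_congr this, Summable.tsum_sub (sG.mul_left _) (sH.mul_left _),
      tsum_mul_left, tsum_mul_left]
  -- evaluate the outer sum
  have sOuter1 : Summable fun k => (z * A k) * (∑' l, G l) :=
    ((sA.mul_left z).mul_right _)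
  have sOuter2 : Summable fun k : ℕ => (((k : ℝ) + 1) * A k) * (∑' l, H l) :=
    ((sA'.congr fun k => rfl).mul_right _)
  have hS2 : S2 x y n m
      = z * (∑' k, A k) * (∑' l, G l) - (∑' k, A' k) * (∑' l, H l) := by
    rw [S2]
    rw [tsum_congr hinner, Summable.tsum_sub sOuter1 sOuter2, tsum_mul_right, tsum_mul_right,
      tsum_mul_left]
  -- Abel rearrangement on both factors
  set TA : ℝ := ∑' t : ℕ, (∑ k ∈ Finset.range (t + 1), a k) * w ^ (t + 1) with hTA
  set TB : ℝ := ∑' s : ℕ, (∑ l ∈ Finset.range (s + 1), b l) * u ^ (s + 1) with hTB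
  have hAbelA : (∑' k, A k) = (1 - w) * TA :=
    abelSum (fun k => (ha0 k).le) haAnti hw0.le hw1
  have hAbelB : (∑' l, G l) = (1 - u) * TB :=
    abelSum (fun l => (hb0 l).le) hbAnti hu0.le hu1
  have hzuw : z * (1 - w) * (1 - u) = 1 := by
    rw [hz, hu, hw]
    have h1 : x - 1 ≠ 0 := by linarith
    have h2 : y - 1 ≠ 0 := by linarith
    field_simp
  have hkey : S2 x y n m = TA * TB - (∑' k, A' k) * (∑' l, H l) := by
    rw [hS2, hAbelA, hAbelB]
    have : z * ((1 - w) * TA) * ((1 - u) * TB) = (z * (1 - w) * (1 - u)) * (TA * TB) := by ring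
    rw [this, hzuw, one_mul]
  -- summability of the TA, TB families
  have sFA : Summable fun t : ℕ => (∑ k ∈ Finset.range (t + 1), a k) * w ^ (t + 1) := by
    refine Summable.of_nonneg_of_le
      (fun t => mul_nonneg (Finset.sum_nonneg fun k _ => (ha0 k).le) (pow_nonneg hw0.le _))
      (fun t => ?_) ((sumGeom' hw0.le hw1).mul_left (a 0))
    have : (∑ k ∈ Finset.range (t + 1), a k) ≤ ((t : ℝ) + 1) * a 0 := by
      calc (∑ k ∈ Finset.range (t + 1), a k) ≤ ∑ _k ∈ Finset.range (t + 1), a 0 :=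
            Finset.sum_le_sum fun k _ => haub k
        _ = ((t : ℝ) + 1) * a 0 := by
            rw [Finset.sum_const, Finset.card_range, nsmul_eq_mul]; push_cast; ring
    calc (∑ k ∈ Finset.range (t + 1), a k) * w ^ (t + 1)
        ≤ (((t : ℝ) + 1) * a 0) * w ^ (t + 1) :=
          mul_le_mul_of_nonneg_right this (pow_nonneg hw0.le _)
      _ = a 0 * (((t : ℝ) + 1) * w ^ (t + 1)) := by ring
  have sFB : Summable fun s : ℕ => (∑ l ∈ Finset.range (s + 1), b l) * u ^ (s + 1) := by
    refine Summable.of_nonneg_of_le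
      (fun s => mul_nonneg (Finset.sum_nonneg fun l _ => (hb0 l).le) (pow_nonneg hu0.le _))
      (fun s => ?_) ((sumGeom' hu0.le hu1).mul_left (b 0))
    have : (∑ l ∈ Finset.range (s + 1), b l) ≤ ((s : ℝ) + 1) * b 0 := by
      calc (∑ l ∈ Finset.range (s + 1), b l) ≤ ∑ _l ∈ Finset.range (s + 1), b 0 :=
            Finset.sum_le_sum fun l _ => hbub l
        _ = ((s : ℝ) + 1) * b 0 := by
            rw [Finset.sum_const, Finset.card_range, nsmul_eq_mul]; push_cast; ring
    calc (∑ l ∈ Finset.range (s + 1), b l) * u ^ (s + 1)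
        ≤ (((s : ℝ) + 1) * b 0) * u ^ (s + 1) :=
          mul_le_mul_of_nonneg_right this (pow_nonneg hu0.le _)
      _ = b 0 * (((s : ℝ) + 1) * u ^ (s + 1)) := by ring
  -- termwise inequalities A' ≤ FA, H ≤ FB
  have htermA : ∀ t : ℕ, A' t ≤ (∑ k ∈ Finset.range (t + 1), a k) * w ^ (t + 1) := by
    intro t
    have h1 : ((t : ℝ) + 1) * a t = ∑ _k ∈ Finset.range (t + 1), a t := by
      rw [Finset.sum_const, Finset.card_range, nsmul_eq_mul]; push_cast; ring
    have h2 : (∑ _k ∈ Finset.range (t + 1), a t) ≤ ∑ k ∈ Finset.range (t + 1), a k :=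
      Finset.sum_le_sum fun k hk => haAnti (Nat.le_of_lt_succ (Finset.mem_range.mp hk))
    calc A' t = (((t : ℝ) + 1) * a t) * w ^ (t + 1) := by rw [hA']; ring
      _ ≤ (∑ k ∈ Finset.range (t + 1), a k) * w ^ (t + 1) :=
          mul_le_mul_of_nonneg_right (h1 ▸ h2) (pow_nonneg hw0.le _)
  have htermB : ∀ s : ℕ, H s ≤ (∑ l ∈ Finset.range (s + 1), b l) * u ^ (s + 1) := by
    intro s
    have h1 : ((s : ℝ) + 1) * b s = ∑ _l ∈ Finset.range (s + 1), b s := by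
      rw [Finset.sum_const, Finset.card_range, nsmul_eq_mul]; push_cast; ring
    have h2 : (∑ _l ∈ Finset.range (s + 1), b s) ≤ ∑ l ∈ Finset.range (s + 1), b l :=
      Finset.sum_le_sum fun l hl => hbAnti (Nat.le_of_lt_succ (Finset.mem_range.mp hl))
    calc H s = (((s : ℝ) + 1) * b s) * u ^ (s + 1) := by rw [hH]; ring
      _ ≤ (∑ l ∈ Finset.range (s + 1), b l) * u ^ (s + 1) :=
          mul_le_mul_of_nonneg_right (h1 ▸ h2) (pow_nonneg hu0.le _)
  have hA'le : (∑' k, A' k) ≤ TA := Summable.tsum_le_tsum htermA sA' sFA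
  have hHle : (∑' l, H l) ≤ TB := Summable.tsum_le_tsum htermB sH sFB
  have hA'pos : 0 < ∑' k, A' k := by
    refine Summable.tsum_pos sA' (fun k => ?_) 0 ?_
    · exact mul_nonneg (by positivity) (mul_nonneg (ha0 k).le (pow_nonneg hw0.le _))
    · simp only [hA']
      push_cast
      have := ha0 0
      positivity
  have hHpos : 0 < ∑' l, H l := by
    refine Summable.tsum_pos sH (fun l => ?_) 0 ?_
    · exact mul_nonneg (by positivity) (mul_nonneg (hb0 l).le (pow_nonneg hu0.le _))
    · simp only [hH]
      push_cast
      have := hb0 0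
      positivity
  have hTApos : 0 < TA := lt_of_lt_of_le hA'pos hA'le
  have hTBpos : 0 < TB := lt_of_lt_of_le hHpos hHle
  have hprodle : (∑' k, A' k) * (∑' l, H l) ≤ TA * TB :=
    mul_le_mul hA'le hHle hHpos.le hTApos.le
  constructor
  · rw [hkey]; linarith
  constructor
  · -- S2 = 0 → both constant
    intro h0
    have heq : TA * TB = (∑' k, A' k) * (∑' l, H l) := by
      rw [hkey] at h0; linarith
    have hTAeq : TA = ∑' k, A' k := by
      by_contra hne
      have hlt : (∑' k, A' k) < TA := lt_of_le_of_ne hA'le (fun h => hne h.symm)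
      have : (∑' k, A' k) * (∑' l, H l) < TA * TB :=
        lt_of_lt_of_le (mul_lt_mul_of_pos_right hlt hHpos)
          (mul_le_mul_of_nonneg_left hHle hTApos.le)
      linarith
    have hTBeq : TB = ∑' l, H l := by
      by_contra hne
      have hlt : (∑' l, H l) < TB := lt_of_le_of_ne hHle (fun h => hne h.symm)
      have : (∑' k, A' k) * (∑' l, H l) < TA * TB :=
        lt_of_lt_of_le (mul_lt_mul_of_pos_left hlt hA'pos)
          (mul_le_mul_of_nonneg_right hA'le hTBpos.le)
      linarith
    -- termwise equality from tsum equality of nonneg differences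
    have hptA : ∀ t : ℕ, (∑ k ∈ Finset.range (t + 1), a k) * w ^ (t + 1) = A' t := by
      have hsub : Summable fun t =>
          (∑ k ∈ Finset.range (t + 1), a k) * w ^ (t + 1) - A' t := sFA.sub sA'
      have hts : (∑' t, ((∑ k ∈ Finset.range (t + 1), a k) * w ^ (t + 1) - A' t)) = 0 := by
        rw [Summable.tsum_sub sFA sA', ← hTA, ← hTAeq]; ring
      intro t
      have hle : (∑ k ∈ Finset.range (t + 1), a k) * w ^ (t + 1) - A' t
          ≤ ∑' t, ((∑ k ∈ Finset.range (t + 1), a k) * w ^ (t + 1) - A' t) :=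
        Summable.le_tsum hsub t (fun j _ => sub_nonneg.mpr (htermA j))
      have hge := sub_nonneg.mpr (htermA t)
      rw [hts] at hle
      linarith
    have hptB : ∀ s : ℕ, (∑ l ∈ Finset.range (s + 1), b l) * u ^ (s + 1) = H s := by
      have hsub : Summable fun s =>
          (∑ l ∈ Finset.range (s + 1), b l) * u ^ (s + 1) - H s := sFB.sub sH
      have hts : (∑' s, ((∑ l ∈ Finset.range (s + 1), b l) * u ^ (s + 1) - H s)) = 0 := by
        rw [Summable.tsum_sub sFB sH, ← hTB, ← hTBeq]; ring
      intro s
      have hle : (∑ l ∈ Finset.range (s + 1), b l) * u ^ (s + 1) - H s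
          ≤ ∑' s, ((∑ l ∈ Finset.range (s + 1), b l) * u ^ (s + 1) - H s) :=
        Summable.le_tsum hsub s (fun j _ => sub_nonneg.mpr (htermB j))
      have hge := sub_nonneg.mpr (htermB s)
      rw [hts] at hle
      linarith
    constructor
    · intro t
      have h1 := hptA t
      have hwne : w ^ (t + 1) ≠ 0 := (pow_pos hw0 _).ne'
      have h2 : (∑ k ∈ Finset.range (t + 1), a k) = ((t : ℝ) + 1) * a t := by
        have : (∑ k ∈ Finset.range (t + 1), a k) * w ^ (t + 1)
            = (((t : ℝ) + 1) * a t) * w ^ (t + 1) := by rw [h1, hA']; ring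
        exact mul_right_cancel₀ hwne this
      have h3 : (∑ k ∈ Finset.range (t + 1), (fun _ => a t) k)
          = ∑ k ∈ Finset.range (t + 1), a k := by
        rw [Finset.sum_const, Finset.card_range, nsmul_eq_mul, h2]; push_cast; ring
      have h4 := (Finset.sum_eq_sum_iff_of_le
        (fun k hk => haAnti (Nat.le_of_lt_succ (Finset.mem_range.mp hk)))).mp h3
      have h5 : a t = a 0 := h4 0 (Finset.mem_range.mpr (Nat.succ_pos t))
      -- a t = a 0 → n t = n 0
      have h6 : x ^ n t = x ^ n 0 := by
        have := congrArg (·⁻¹) h5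
        simpa [ha] using this
      exact le_antisymm
        ((Real.rpow_le_rpow_left_iff hx).mp h6.le)
        ((Real.rpow_le_rpow_left_iff hx).mp h6.ge)
    · intro s
      have h1 := hptB s
      have hune : u ^ (s + 1) ≠ 0 := (pow_pos hu0 _).ne'
      have h2 : (∑ l ∈ Finset.range (s + 1), b l) = ((s : ℝ) + 1) * b s := by
        have : (∑ l ∈ Finset.range (s + 1), b l) * u ^ (s + 1)
            = (((s : ℝ) + 1) * b s) * u ^ (s + 1) := by rw [h1, hH]; ring
        exact mul_right_cancel₀ hune this
      have h3 : (∑ l ∈ Finset.range (s + 1), (fun _ => b s) l)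
          = ∑ l ∈ Finset.range (s + 1), b l := by
        rw [Finset.sum_const, Finset.card_range, nsmul_eq_mul, h2]; push_cast; ring
      have h4 := (Finset.sum_eq_sum_iff_of_le
        (fun l hl => hbAnti (Nat.le_of_lt_succ (Finset.mem_range.mp hl)))).mp h3
      have h5 : b s = b 0 := h4 0 (Finset.mem_range.mpr (Nat.succ_pos s))
      have h6 : y ^ m s = y ^ m 0 := by
        have := congrArg (·⁻¹) h5
        simpa [hb] using this
      exact le_antisymm
        ((Real.rpow_le_rpow_left_iff hy).mp h6.le)
        ((Real.rpow_le_rpow_left_iff hy).mp h6.ge)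
  · -- both constant → S2 = 0
    rintro ⟨hnc, hmc⟩
    have haC : ∀ k, a k = a 0 := fun k => by simp [ha, hnc k]
    have hbC : ∀ l, b l = b 0 := fun l => by simp [hb, hmc l]
    have hTAeq : TA = ∑' k, A' k := by
      rw [hTA]
      refine tsum_congr fun t => ?_
      rw [hA']
      have : (∑ k ∈ Finset.range (t + 1), a k) = ((t : ℝ) + 1) * a t := by
        rw [haC t]
        calc (∑ k ∈ Finset.range (t + 1), a k) = ∑ _k ∈ Finset.range (t + 1), a 0 :=
              Finset.sum_congr rfl fun k _ => haC k
          _ = ((t : ℝ) + 1) * a 0 := by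
              rw [Finset.sum_const, Finset.card_range, nsmul_eq_mul]; push_cast; ring
      rw [this]; ring
    have hTBeq : TB = ∑' l, H l := by
      rw [hTB]
      refine tsum_congr fun s => ?_
      rw [hH]
      have : (∑ l ∈ Finset.range (s + 1), b l) = ((s : ℝ) + 1) * b s := by
        rw [hbC s]
        calc (∑ l ∈ Finset.range (s + 1), b l) = ∑ _l ∈ Finset.range (s + 1), b 0 :=
              Finset.sum_congr rfl fun l _ => hbC l
          _ = ((s : ℝ) + 1) * b 0 := by
              rw [Finset.sum_const, Finset.card_range, nsmul_eq_mul]; push_cast; ring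
      rw [this]; ring
    rw [hkey, hTAeq, hTBeq]; ring
end

section
/- Let mu = (mu_1 ... mu_m)^infty be a periodic binary sequence with minimal period m such that sigma^j(mu) is lexicographically greater than or equal to mu for all j >= 0. Then for all 0 < i < m, the word mu_{i+1} ... mu_m is lexicographically strictly greater than mu_1 ... mu_{m-i}. -/
/-- The one-sided left shift on binary sequences. -/
def shift (x : ℕ → Bool) : ℕ → Bool := fun n => x (n + 1)

/-- Strict lexicographic order on binary sequences (`false < true`). -/
def lexLt (x y : ℕ → Bool) : Prop :=
  ∃ k : ℕ, (∀ i < k, x i = y i) ∧ x k < y k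

/-- Non-strict lexicographic order on binary sequences. -/
def lexLe (x y : ℕ → Bool) : Prop := lexLt x y ∨ x = y

lemma shift_iter (x : ℕ → Bool) (j n : ℕ) : shift^[j] x n = x (n + j) := by
  induction j generalizing x n with
  | zero => rfl
  | succ j ih =>
    rw [Function.iterate_succ_apply, ih]
    show x (n + j + 1) = x (n + (j + 1))
    rw [Nat.add_assoc]

/-- If `mu` is periodic with minimal period `m` and `σ^j(mu) ≽ mu` for all `j`,
then `mu_{i+1}…mu_m ≻ mu_1…mu_{m-i}` for all `0 < i < m` (0-indexed digits). -/
theorem stmt4 (mu : ℕ → Bool) (m : ℕ) (hm : 0 < m)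
    (hper : ∀ k, mu (k + m) = mu k)
    (hmin : ∀ m', 0 < m' → m' < m → ¬ (∀ k, mu (k + m') = mu k))
    (hshift : ∀ j : ℕ, lexLe mu (shift^[j] mu)) :
    ∀ i, 0 < i → i < m →
      ∃ j < m - i, (∀ t < j, mu t = mu (i + t)) ∧ mu j < mu (i + j) := by
  intro i hi0 him
  rcases hshift i with ⟨k, H1, H2⟩ | heq
  swap
  · refine absurd (fun k => ?_) (hmin i hi0 him)
    have := congrFun heq k
    rw [shift_iter] at this
    exact this.symm
  rw [shift_iter] at H2
  simp only [shift_iter] at H1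
  by_cases hk : k < m - i
  · exact ⟨k, hk, fun t ht => by rw [H1 t ht, add_comm], by rwa [add_comm]⟩
  · -- k ≥ m - i, derive contradiction via hshift (m - i)
    exfalso
    push_neg at hk
    set s := k - (m - i) with hs
    have hks : s + (m - i) = k := Nat.sub_add_cancel hk
    have hmi : (m - i) + i = m := Nat.sub_add_cancel him.le
    have hmuk : mu k = false ∧ mu (k + i) = true := by
      rcases Bool.lt_iff.mp H2 with ⟨h1, h2⟩; exact ⟨h1, h2⟩
    have hsm : mu s = true := by
      have : k + i = s + m := by omega
      rw [this, hper s] at hmuk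
      exact hmuk.2
    have hνs : mu (s + (m - i)) = false := by rw [hks]; exact hmuk.1
    have hagree : ∀ t < s, mu (t + (m - i)) = mu t := by
      intro t ht
      have h1 : t + (m - i) < k := by omega
      have := H1 (t + (m - i)) h1
      rw [add_assoc, hmi, hper t] at this
      exact this
    rcases hshift (m - i) with ⟨k', G1, G2⟩ | geq
    · rw [shift_iter] at G2
      simp only [shift_iter] at G1
      rcases lt_trichotomy k' s with h | h | h
      · rw [(hagree k' h).symm] at G2
        exact lt_irrefl _ G2
      · subst h
        rw [hsm, hνs] at G2
        exact absurd G2 (by simp)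
      · have := G1 s h
        rw [hsm, hνs] at this
        simp at this
    · have := congrFun geq s
      rw [shift_iter, hsm, hνs] at this
      simp at this
end

section
/- Let mu be a binary sequence with mu <= sigma^j(mu) <= alpha for all j >= 0 and suppose additionally sigma^j(mu) > mu strictly for all j >= 1, where alpha satisfies sigma^j(alpha) <= alpha for all j >= 0. Let n_1 < n_2 < ... be the indices from the lexicographic lemma (so mu_1...mu_{n_j - k} < mu_{k+1}...mu_{n_j} for all 1 <= k < n_j). Then the periodic sequences mu^{n_j} := (mu_1...mu_{n_j})^infty satisfy mu^{n_j} < mu^{n_{j+1}} < mu lexicographically, mu^{n_j} converges to mu, and mu^{n_j} <= sigma^i(mu^{n_j}) < alpha for all i >= 0. -/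
lemma shift_iterate (i : ℕ) (x : ℕ → Bool) (t : ℕ) : shift^[i] x t = x (t + i) := by
  induction i generalizing x t with
  | zero => rfl
  | succ i ih =>
    rw [Function.iterate_succ_apply, ih]
    rfl

lemma lexLt_of_lt_of_le {x y z : ℕ → Bool} (h1 : lexLt x y) (h2 : lexLe y z) : lexLt x z := by
  rcases h2 with h2 | rfl
  · obtain ⟨k1, ha1, hl1⟩ := h1
    obtain ⟨k2, ha2, hl2⟩ := h2
    rcases lt_trichotomy k1 k2 with h | h | h
    · exact ⟨k1, fun i hi => (ha1 i hi).trans (ha2 i (by omega)),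
        by rw [← ha2 k1 h]; exact hl1⟩
    · subst h
      exact ⟨k1, fun i hi => (ha1 i hi).trans (ha2 i hi), lt_trans hl1 hl2⟩
    · exact ⟨k2, fun i hi => (ha1 i (by omega)).trans (ha2 i hi),
        by rw [ha1 k2 h]; exact hl2⟩
  · exact h1

lemma keyA1 (mu : ℕ → Bool) (hVm : ∀ j : ℕ, lexLe mu (shift^[j] mu))
    (m : ℕ) (hm : 1 ≤ m) (k : ℕ)
    (hpre : ∀ i < k, mu (i % m) = mu i) (hne : mu (k % m) ≠ mu k) :
    mu (k % m) = false ∧ mu k = true := by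
  have hrm : k % m < m := Nat.mod_lt _ hm
  have hkm : m ≤ k := by
    by_contra h
    push_neg at h
    exact hne (by rw [Nat.mod_eq_of_lt h])
  set r := k % m with hr
  set M := m * (k / m) with hM
  have hMr : M + r = k := Nat.div_add_mod k m
  have hag : ∀ s < r, mu (s + M) = mu s := by
    intro s hs
    have h1 : s + M < k := by omega
    have h2 : (s + M) % m = s := by
      rw [hM, Nat.add_mul_mod_self_left, Nat.mod_eq_of_lt (by omega)]
    have := hpre (s + M) h1
    rw [h2] at this
    exact this.symm
  cases hcr : mu r <;> cases hck : mu k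
  · exact absurd (hcr.trans hck.symm) hne
  · exact ⟨rfl, rfl⟩
  · exfalso
    rcases hVm M with ⟨p, hagp, hltp⟩ | heq
    · rw [shift_iterate] at hltp
      rcases lt_trichotomy p r with h | h | h
      · rw [hag p h] at hltp
        exact absurd hltp (lt_irrefl _)
      · rw [h] at hltp
        have e : r + M = k := by omega
        rw [e, hck] at hltp
        rw [hcr] at hltp
        exact absurd hltp (by decide)
      · have := hagp r h
        rw [shift_iterate] at this
        have e : r + M = k := by omega
        rw [e, hck, hcr] at this
        exact absurd this (by decide)
    · have := congrFun heq r
      rw [shift_iterate] at this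
      have e : r + M = k := by omega
      rw [e, hck, hcr] at this
      exact absurd this (by decide)
  · exact absurd (hcr.trans hck.symm) hne

lemma keyA2 (mu : ℕ → Bool) (hVm : ∀ j : ℕ, lexLe mu (shift^[j] mu))
    (m : ℕ) (hm : 1 ≤ m) (hs : lexLt mu (shift^[m] mu)) :
    lexLt (fun i => mu (i % m)) mu := by
  classical
  have hex : ∃ i, mu (i % m) ≠ mu i := by
    by_contra h
    push_neg at h
    have heq : shift^[m] mu = mu := by
      funext t
      rw [shift_iterate]
      rw [← h (t + m), ← h t]
      congr 1
      exact Nat.add_mod_right t m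
    rw [heq] at hs
    obtain ⟨k, _, hk⟩ := hs
    exact absurd hk (lt_irrefl _)
  set k := Nat.find hex with hkdef
  have hk : mu (k % m) ≠ mu k := Nat.find_spec hex
  have hpre : ∀ i < k, mu (i % m) = mu i := by
    intro i hi
    have := Nat.find_min hex hi
    exact not_ne_iff.mp this
  obtain ⟨hf, ht⟩ := keyA1 mu hVm m hm k hpre hk
  refine ⟨k, hpre, ?_⟩
  show mu (k % m) < mu k
  rw [hf, ht]
  decide

/-- Lemma on approximating `mu` from below by the periodic sequences
`mu^{n_j} = (mu_1…mu_{n_j})^∞`. -/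
theorem stmt10 (mu alpha : ℕ → Bool) (h0 : mu 0 = false) (ha0 : alpha 0 = true)
    (hV : ∀ j : ℕ, (lexLe mu (shift^[j] mu) ∧ lexLe (shift^[j] mu) alpha) ∧
      (lexLe mu (shift^[j] alpha) ∧ lexLe (shift^[j] alpha) alpha))
    (hstrict : ∀ j, 1 ≤ j → lexLt mu (shift^[j] mu))
    (n : ℕ → ℕ) (hn1 : 1 ≤ n 0) (hmono : StrictMono n)
    (hword : ∀ j, ∀ k, 1 ≤ k → k < n j →
      ∃ t < n j - k, (∀ s < t, mu s = mu (k + s)) ∧ mu t < mu (k + t)) :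
    (∀ j, lexLt (fun i => mu (i % n j)) (fun i => mu (i % n (j + 1)))) ∧
    (∀ j, lexLt (fun i => mu (i % n j)) mu) ∧
    (∀ N : ℕ, ∃ J, ∀ j ≥ J, ∀ i < N, mu (i % n j) = mu i) ∧
    (∀ j, ∀ i : ℕ,
      lexLe (fun t => mu (t % n j)) (shift^[i] (fun t => mu (t % n j))) ∧
      lexLt (shift^[i] (fun t => mu (t % n j))) alpha) := by
  classical
  have hVm : ∀ j : ℕ, lexLe mu (shift^[j] mu) := fun j => (hV j).1.1
  have hmj : ∀ j, 1 ≤ n j := fun j => le_trans hn1 (hmono.monotone (Nat.zero_le j))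
  refine ⟨?_, ?_, ?_, ?_⟩
  · -- part A
    intro j
    set m := n j with hmdef
    set m' := n (j + 1) with hm'def
    have hm : 1 ≤ m := hmj j
    have hmm' : m < m' := hmono (by omega)
    by_cases h : ∀ i < m', mu (i % m) = mu i
    · exfalso
      obtain ⟨t, ht, hag, hlt⟩ := hword (j + 1) m hm hmm'
      have h1 : m + t < m' := by omega
      have h2 : mu (m + t) = mu t := by
        have e1 := h (m + t) h1
        have e2 := h t (by omega)
        rw [← e1, Nat.add_mod_left, e2]
      rw [h2] at hlt
      exact absurd hlt (lt_irrefl _)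
    · push_neg at h
      obtain ⟨i0, hi0m, hi0⟩ := h
      have hex : ∃ i, mu (i % m) ≠ mu i := ⟨i0, hi0⟩
      set k := Nat.find hex with hkdef
      have hk : mu (k % m) ≠ mu k := Nat.find_spec hex
      have hkm' : k < m' := lt_of_le_of_lt (Nat.find_min' hex hi0) hi0m
      have hpre : ∀ i < k, mu (i % m) = mu i := by
        intro i hi
        exact not_ne_iff.mp (Nat.find_min hex hi)
      obtain ⟨hf, ht⟩ := keyA1 mu hVm m hm k hpre hk
      refine ⟨k, ?_, ?_⟩
      · intro i hi
        show mu (i % m) = mu (i % m')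
        rw [hpre i hi, Nat.mod_eq_of_lt (by omega)]
      · show mu (k % m) < mu (k % m')
        rw [hf, Nat.mod_eq_of_lt hkm', ht]
        decide
  · -- part B
    intro j
    exact keyA2 mu hVm (n j) (hmj j) (hstrict (n j) (hmj j))
  · -- part C
    intro N
    refine ⟨N, fun j hj i hi => ?_⟩
    have hjn : j ≤ n j := hmono.le_apply
    rw [Nat.mod_eq_of_lt (by omega)]
  · -- part D
    intro j i
    set m := n j with hmdef
    have hm : 1 ≤ m := hmj j
    set r := i % m with hrdef
    have hr : r < m := Nat.mod_lt _ hm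
    have hshift : shift^[i] (fun t => mu (t % m)) = fun t => mu ((t + r) % m) := by
      funext t
      rw [shift_iterate]
      show mu ((t + i) % m) = mu ((t + r) % m)
      congr 1
      rw [Nat.add_mod t i, hrdef, Nat.add_mod t (i % m), Nat.mod_mod_of_dvd i (dvd_refl m)]
    constructor
    · rw [hshift]
      rcases Nat.eq_zero_or_pos r with h0r | h1r
      · right
        funext t
        rw [h0r, Nat.add_zero]
      · left
        obtain ⟨t, ht, hag, hlt⟩ := hword j r h1r hr
        refine ⟨t, ?_, ?_⟩
        · intro s hs
          show mu (s % m) = mu ((s + r) % m)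
          rw [Nat.mod_eq_of_lt (by omega : s < m), Nat.mod_eq_of_lt (by omega : s + r < m),
            Nat.add_comm s r]
          exact hag s hs
        · show mu (t % m) < mu ((t + r) % m)
          rw [Nat.mod_eq_of_lt (by omega : t < m), Nat.mod_eq_of_lt (by omega : t + r < m),
            Nat.add_comm t r]
          exact hlt
    · rw [hshift]
      have hra : lexLe (shift^[r] mu) alpha := (hV r).1.2
      have hxlt : lexLt (fun t2 => mu (t2 % m)) mu :=
        keyA2 mu hVm m hm (hstrict m hm)
      have hma : lexLe mu (shift^[m - r] alpha) := (hV (m - r)).2.1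
      have hxa : lexLt (fun t2 => mu (t2 % m)) (shift^[m - r] alpha) :=
        lexLt_of_lt_of_le hxlt hma
      by_cases hpre : ∀ s < m - r, mu (s + r) = alpha s
      · obtain ⟨q, hq1, hq2⟩ := hxa
        have hq2' : mu (q % m) < alpha (q + (m - r)) := by
          rw [shift_iterate] at hq2
          exact hq2
        refine ⟨(m - r) + q, ?_, ?_⟩
        · intro s hs
          show mu ((s + r) % m) = alpha s
          rcases lt_or_ge s (m - r) with hcase | hcase
          · rw [Nat.mod_eq_of_lt (by omega)]
            exact hpre s hcase
          · obtain ⟨u, rfl⟩ : ∃ u, s = (m - r) + u := ⟨s - (m - r), by omega⟩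
            have hu : u < q := by omega
            have e : ((m - r) + u + r) % m = u % m := by
              have e2 : (m - r) + u + r = m + u := by omega
              rw [e2, Nat.add_mod_left]
            rw [e]
            have h1 : mu (u % m) = alpha (u + (m - r)) := by
              have := hq1 u hu
              rw [shift_iterate] at this
              exact this
            rw [h1]
            congr 1
            omega
        · show mu (((m - r) + q + r) % m) < alpha ((m - r) + q)
          have e : ((m - r) + q + r) % m = q % m := by
            have e2 : (m - r) + q + r = m + q := by omega
            rw [e2, Nat.add_mod_left]
          rw [e, Nat.add_comm (m - r) q]
          exact hq2'
      · rcases hra with ⟨p, hp1, hp2⟩ | heq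
        · have hp2' : mu (p + r) < alpha p := by
            rw [shift_iterate] at hp2
            exact hp2
          have hpm : p < m - r := by
            by_contra hge
            push_neg at hge
            apply hpre
            intro s hs
            have := hp1 s (by omega)
            rw [shift_iterate] at this
            exact this
          refine ⟨p, ?_, ?_⟩
          · intro s hs
            show mu ((s + r) % m) = alpha s
            rw [Nat.mod_eq_of_lt (by omega)]
            have := hp1 s hs
            rw [shift_iterate] at this
            exact this
          · show mu ((p + r) % m) < alpha p
            rw [Nat.mod_eq_of_lt (by omega)]
            exact hp2'
        · exfalso
          apply hpre
          intro s hs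
          have := congrFun heq s
          rw [shift_iterate] at this
          exact this
end

section
/- Let x, y > 1 be reals, z = xy/((x-1)(y-1)), and let (n_k), (m_l) be non-decreasing real sequences with S((n_k),(m_l)) := sum_{k,l >= 1} (z - kl)/(x^{n_k+l} y^{k+m_l}) <= 0. Suppose n_{k'} < n_{k'+1} for some index k'. Define hat-n_k = n_k for k <= k' and hat-n_k = n_k - (n_{k'+1} - n_{k'}) for k > k'. Then (hat-n_k) is non-decreasing with hat-n_{k'+1} = hat-n_{k'}, and S((hat-n_k),(m_l)) < S((n_k),(m_l)). -/
lemma geo_aux {r : ℝ} (h0 : 0 ≤ r) (h1 : r < 1) :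
    Summable fun l : ℕ => ((l : ℝ) + 1) * r ^ (l + 1) := by
  have h2 : Summable (fun l : ℕ => ((l : ℝ)) * r ^ l) := by
    simpa using summable_pow_mul_geometric_of_norm_lt_one 1
      (r := r) (by rwa [Real.norm_eq_abs, abs_of_nonneg h0])
  have h3 : Summable (fun l : ℕ => r ^ l) := summable_geometric_of_lt_one h0 h1
  have h4 := (h2.add h3).mul_left r
  refine h4.congr fun l => ?_
  ring

lemma rpow_inv_nat {x : ℝ} (hx0 : 0 < x) (l : ℕ) :
    (x ^ ((l : ℝ) + 1))⁻¹ = (x⁻¹) ^ (l + 1) := by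
  have h : ((l : ℝ) + 1) = ((l + 1 : ℕ) : ℝ) := by push_cast; ring
  rw [h, Real.rpow_natCast, inv_pow]

lemma sumA {x y : ℝ} (hx : 1 < x) (hy : 1 < y) {m : ℕ → ℝ} (hm : Monotone m) :
    Summable fun l : ℕ => (x ^ ((l : ℝ) + 1) * y ^ (m l))⁻¹ := by
  have hx0 : (0:ℝ) < x := lt_trans one_pos hx
  have hy0 : (0:ℝ) < y := lt_trans one_pos hy
  have hsum : Summable (fun l : ℕ => (y ^ (m 0))⁻¹ * (((l : ℝ) + 1) * (x⁻¹) ^ (l + 1))) :=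
    (geo_aux (by positivity) (inv_lt_one_of_one_lt₀ hx)).mul_left _
  refine Summable.of_nonneg_of_le (fun l => by positivity) (fun l => ?_) hsum
  have h1 : (x ^ ((l : ℝ) + 1) * y ^ (m l))⁻¹ = (y ^ (m l))⁻¹ * (x⁻¹) ^ (l + 1) := by
    rw [mul_inv, rpow_inv_nat hx0]; ring
  rw [h1]
  have h2 : (y ^ (m l))⁻¹ ≤ (y ^ (m 0))⁻¹ := by
    apply inv_anti₀ (Real.rpow_pos_of_pos hy0 _)
    exact (Real.rpow_le_rpow_left_iff hy).2 (hm (Nat.zero_le l))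
  have h3 : (0:ℝ) ≤ (x⁻¹) ^ (l + 1) := by positivity
  have h4 : (1:ℝ) ≤ (l : ℝ) + 1 := le_add_of_nonneg_left (Nat.cast_nonneg l)
  calc (y ^ (m l))⁻¹ * (x⁻¹) ^ (l + 1) ≤ (y ^ (m 0))⁻¹ * (x⁻¹) ^ (l + 1) :=
        mul_le_mul_of_nonneg_right h2 h3
    _ ≤ (y ^ (m 0))⁻¹ * (((l : ℝ) + 1) * (x⁻¹) ^ (l + 1)) :=
        mul_le_mul_of_nonneg_left (le_mul_of_one_le_left h3 h4)
          (inv_nonneg.2 (Real.rpow_pos_of_pos hy0 (m 0)).le)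

lemma sumB {x y : ℝ} (hx : 1 < x) (hy : 1 < y) {m : ℕ → ℝ} (hm : Monotone m) :
    Summable fun l : ℕ => ((l : ℝ) + 1) * (x ^ ((l : ℝ) + 1) * y ^ (m l))⁻¹ := by
  have hx0 : (0:ℝ) < x := lt_trans one_pos hx
  have hy0 : (0:ℝ) < y := lt_trans one_pos hy
  have hsum : Summable (fun l : ℕ => (y ^ (m 0))⁻¹ * (((l : ℝ) + 1) * (x⁻¹) ^ (l + 1))) :=
    (geo_aux (by positivity) (inv_lt_one_of_one_lt₀ hx)).mul_left _
  refine Summable.of_nonneg_of_le (fun l => by positivity) (fun l => ?_) hsum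
  have h1 : ((l : ℝ) + 1) * (x ^ ((l : ℝ) + 1) * y ^ (m l))⁻¹
      = (y ^ (m l))⁻¹ * (((l : ℝ) + 1) * (x⁻¹) ^ (l + 1)) := by
    rw [mul_inv, rpow_inv_nat hx0]; ring
  rw [h1]
  have h2 : (y ^ (m l))⁻¹ ≤ (y ^ (m 0))⁻¹ := by
    apply inv_anti₀ (Real.rpow_pos_of_pos hy0 _)
    exact (Real.rpow_le_rpow_left_iff hy).2 (hm (Nat.zero_le l))
  have h3 : (0:ℝ) ≤ ((l : ℝ) + 1) * (x⁻¹) ^ (l + 1) := by positivity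
  exact mul_le_mul_of_nonneg_right h2 h3

lemma inner_eq {x y : ℝ} (hx : 1 < x) (hy : 1 < y) {m : ℕ → ℝ} (hm : Monotone m)
    (ν : ℝ) (k : ℕ) :
    (∑' l : ℕ, (x * y / ((x - 1) * (y - 1)) - ((k : ℝ) + 1) * ((l : ℝ) + 1)) /
      (x ^ (ν + ((l : ℝ) + 1)) * y ^ (((k : ℝ) + 1) + m l)))
    = (x ^ ν * y ^ ((k : ℝ) + 1))⁻¹ *
      (x * y / ((x - 1) * (y - 1)) * (∑' l : ℕ, (x ^ ((l : ℝ) + 1) * y ^ (m l))⁻¹)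
       - ((k : ℝ) + 1) * (∑' l : ℕ, ((l : ℝ) + 1) * (x ^ ((l : ℝ) + 1) * y ^ (m l))⁻¹)) := by
  have hx0 : (0:ℝ) < x := lt_trans one_pos hx
  have hy0 : (0:ℝ) < y := lt_trans one_pos hy
  have ha := sumA hx hy hm
  have hb := sumB hx hy hm
  set z := x * y / ((x - 1) * (y - 1)) with hz
  have hterm : ∀ l : ℕ, (z - ((k : ℝ) + 1) * ((l : ℝ) + 1)) /
      (x ^ (ν + ((l : ℝ) + 1)) * y ^ (((k : ℝ) + 1) + m l))
      = (x ^ ν * y ^ ((k : ℝ) + 1))⁻¹ *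
        (z * (x ^ ((l : ℝ) + 1) * y ^ (m l))⁻¹
          - ((k : ℝ) + 1) * (((l : ℝ) + 1) * (x ^ ((l : ℝ) + 1) * y ^ (m l))⁻¹)) := by
    intro l
    rw [Real.rpow_add hx0, Real.rpow_add hy0]
    have h1 : x ^ ν ≠ 0 := (Real.rpow_pos_of_pos hx0 _).ne'
    have h2 : x ^ ((l : ℝ) + 1) ≠ 0 := (Real.rpow_pos_of_pos hx0 _).ne'
    have h3 : y ^ ((k : ℝ) + 1) ≠ 0 := (Real.rpow_pos_of_pos hy0 _).ne'
    have h4 : y ^ (m l) ≠ 0 := (Real.rpow_pos_of_pos hy0 _).ne'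
    field_simp
  rw [tsum_congr hterm, tsum_mul_left,
    Summable.tsum_sub (ha.mul_left z) (hb.mul_left ((k : ℝ) + 1)), tsum_mul_left, tsum_mul_left]

lemma outer_summable {x y : ℝ} (hx : 1 < x) (hy : 1 < y) (ν : ℕ → ℝ) (hν : Monotone ν)
    (P Q : ℝ) :
    Summable fun k : ℕ => (x ^ (ν k) * y ^ ((k : ℝ) + 1))⁻¹ * (P - ((k : ℝ) + 1) * Q) := by
  have hx0 : (0:ℝ) < x := lt_trans one_pos hx
  have hy0 : (0:ℝ) < y := lt_trans one_pos hy
  have hsum : Summable (fun k : ℕ =>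
      (x ^ (ν 0))⁻¹ * (|P| + |Q|) * (((k : ℝ) + 1) * (y⁻¹) ^ (k + 1))) :=
    (geo_aux (by positivity) (inv_lt_one_of_one_lt₀ hy)).mul_left _
  refine Summable.of_abs (Summable.of_nonneg_of_le (fun k => abs_nonneg _) (fun k => ?_) hsum)
  have e1 : |(x ^ (ν k) * y ^ ((k : ℝ) + 1))⁻¹ * (P - ((k : ℝ) + 1) * Q)|
      = (x ^ (ν k))⁻¹ * ((y⁻¹) ^ (k + 1) * |P - ((k : ℝ) + 1) * Q|) := by
    rw [abs_mul, abs_of_nonneg (a := (x ^ (ν k) * y ^ ((k : ℝ) + 1))⁻¹) (by positivity),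
      mul_inv, rpow_inv_nat hy0, mul_assoc]
  rw [e1]
  have h2 : (x ^ (ν k))⁻¹ ≤ (x ^ (ν 0))⁻¹ := by
    apply inv_anti₀ (Real.rpow_pos_of_pos hx0 _)
    exact (Real.rpow_le_rpow_left_iff hx).2 (hν (Nat.zero_le k))
  have h3 : |P - ((k : ℝ) + 1) * Q| ≤ (|P| + |Q|) * ((k : ℝ) + 1) := by
    have h5 := abs_sub P (((k : ℝ) + 1) * Q)
    have h6 : |((k : ℝ) + 1) * Q| = ((k : ℝ) + 1) * |Q| := by
      rw [abs_mul, abs_of_nonneg (by positivity)]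
    have h7 : (1:ℝ) ≤ (k : ℝ) + 1 := le_add_of_nonneg_left (Nat.cast_nonneg k)
    nlinarith [abs_nonneg P, abs_nonneg Q]
  have h8 : (0:ℝ) ≤ (y⁻¹) ^ (k + 1) := by positivity
  have h9 : (0:ℝ) < (x ^ (ν k))⁻¹ := by positivity
  calc (x ^ (ν k))⁻¹ * ((y⁻¹) ^ (k + 1) * |P - ((k : ℝ) + 1) * Q|)
      ≤ (x ^ (ν 0))⁻¹ * ((y⁻¹) ^ (k + 1) * ((|P| + |Q|) * ((k : ℝ) + 1))) := by
        apply mul_le_mul h2 (mul_le_mul_of_nonneg_left h3 h8)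
          (mul_nonneg h8 (abs_nonneg _)) (inv_nonneg.2 (Real.rpow_pos_of_pos hx0 _).le)
    _ = (x ^ (ν 0))⁻¹ * (|P| + |Q|) * (((k : ℝ) + 1) * (y⁻¹) ^ (k + 1)) := by ring

/-- Lemma `l2`: flattening the first jump of `(n_k)` strictly decreases `S` when
`S ≤ 0`. -/
theorem stmt15 (x y : ℝ) (hx : 1 < x) (hy : 1 < y) (n m : ℕ → ℝ)
    (hn : Monotone n) (hm : Monotone m)
    (k' : ℕ) (hk' : n k' < n (k' + 1))
    (hS : S2 x y n m ≤ 0)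
    (nh : ℕ → ℝ)
    (hnh : nh = fun k => if k ≤ k' then n k else n k - (n (k' + 1) - n k')) :
    Monotone nh ∧ nh (k' + 1) = nh k' ∧ S2 x y nh m < S2 x y n m := by
  have hx0 : (0:ℝ) < x := lt_trans one_pos hx
  have hy0 : (0:ℝ) < y := lt_trans one_pos hy
  -- monotonicity of nh
  have hmono : Monotone nh := by
    apply monotone_nat_of_le_succ
    intro k
    simp only [hnh]
    by_cases h1 : k + 1 ≤ k'
    · rw [if_pos (Nat.le_of_succ_le h1), if_pos h1]
      exact hn (Nat.le_succ k)
    · by_cases h2 : k ≤ k'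
      · have hkk : k = k' := by omega
        rw [if_pos h2, if_neg h1, hkk]
        linarith [hn (Nat.le_succ k')]
      · rw [if_neg h2, if_neg h1]
        exact sub_le_sub_right (hn (Nat.le_succ k)) _
  have heq : nh (k' + 1) = nh k' := by
    simp only [hnh]
    rw [if_neg (by omega : ¬ k' + 1 ≤ k'), if_pos (le_refl k')]
    ring
  refine ⟨hmono, heq, ?_⟩
  -- analytic part
  set z := x * y / ((x - 1) * (y - 1)) with hz
  set A := ∑' l : ℕ, (x ^ ((l : ℝ) + 1) * y ^ (m l))⁻¹ with hA
  set B := ∑' l : ℕ, ((l : ℝ) + 1) * (x ^ ((l : ℝ) + 1) * y ^ (m l))⁻¹ with hB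
  have ha := sumA hx hy hm
  have hb := sumB hx hy hm
  have hApos : 0 < A := Summable.tsum_pos ha (fun l => by positivity) 0 (by positivity)
  have hBpos : 0 < B := Summable.tsum_pos hb (fun l => by positivity) 0 (by positivity)
  have hzpos : 0 < z := by
    rw [hz]
    have : (0:ℝ) < x - 1 := by linarith
    have : (0:ℝ) < y - 1 := by linarith
    positivity
  set g : ℕ → ℝ := fun k => z * A - ((k : ℝ) + 1) * B with hg
  set F : ℕ → ℝ := fun k => (x ^ (n k) * y ^ ((k : ℝ) + 1))⁻¹ * g k with hF
  set Fh : ℕ → ℝ := fun k => (x ^ (nh k) * y ^ ((k : ℝ) + 1))⁻¹ * g k with hFh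
  have hSn : S2 x y n m = ∑' k : ℕ, F k := tsum_congr fun k => inner_eq hx hy hm (n k) k
  have hSnh : S2 x y nh m = ∑' k : ℕ, Fh k := tsum_congr fun k => inner_eq hx hy hm (nh k) k
  have hFs : Summable F := outer_summable hx hy n hn (z * A) B
  have hFsh : Summable Fh := outer_summable hx hy nh hmono (z * A) B
  set d := n (k' + 1) - n k' with hd
  have hdpos : 0 < d := sub_pos.2 hk'
  have hxd : 1 < x ^ d := (Real.one_lt_rpow_iff_of_pos hx0).2 (Or.inl ⟨hx, hdpos⟩)
  -- tail relation
  have hcF : ∀ j : ℕ, Fh (j + (k' + 1)) = x ^ d * F (j + (k' + 1)) := by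
    intro j
    have hk : ¬ (j + (k' + 1) ≤ k') := by omega
    have hnhval : nh (j + (k' + 1)) = n (j + (k' + 1)) - d := by
      simp only [hnh]; rw [if_neg hk]
    show (x ^ (nh (j + (k' + 1))) * y ^ (((j + (k' + 1) : ℕ) : ℝ) + 1))⁻¹ * g (j + (k' + 1))
      = x ^ d * ((x ^ (n (j + (k' + 1))) * y ^ (((j + (k' + 1) : ℕ) : ℝ) + 1))⁻¹ * g (j + (k' + 1)))
    rw [hnhval, Real.rpow_sub hx0]
    have h1 : x ^ (n (j + (k' + 1))) ≠ 0 := (Real.rpow_pos_of_pos hx0 _).ne'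
    have h2 : x ^ d ≠ 0 := (Real.rpow_pos_of_pos hx0 _).ne'
    have h3 : y ^ (((j + (k' + 1) : ℕ) : ℝ) + 1) ≠ 0 := (Real.rpow_pos_of_pos hy0 _).ne'
    field_simp
  -- head relation
  have hcH : ∀ k ∈ Finset.range (k' + 1), Fh k = F k := by
    intro k hk
    have hkk : k ≤ k' := by
      have := Finset.mem_range.1 hk; omega
    show (x ^ (nh k) * y ^ ((k : ℝ) + 1))⁻¹ * g k = (x ^ (n k) * y ^ ((k : ℝ) + 1))⁻¹ * g k
    simp only [hnh]; rw [if_pos hkk]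
  set T := ∑' j : ℕ, F (j + (k' + 1)) with hT
  set H := ∑ k ∈ Finset.range (k' + 1), F k with hH
  have key1 : H + T = ∑' k : ℕ, F k := Summable.sum_add_tsum_nat_add (k' + 1) hFs
  have key2 : H + x ^ d * T = ∑' k : ℕ, Fh k := by
    have h1 : ∑' j : ℕ, Fh (j + (k' + 1)) = x ^ d * T := by
      rw [hT, ← tsum_mul_left]
      exact tsum_congr hcF
    have h2 := Summable.sum_add_tsum_nat_add (k' + 1) hFsh
    rw [h1] at h2
    rw [← h2, hH]
    congr 1
    exact (Finset.sum_congr rfl hcH).symm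
  -- T < 0
  have hgmono : ∀ k1 k2 : ℕ, k1 ≤ k2 → g k2 ≤ g k1 := by
    intro k1 k2 h
    show z * A - ((k2 : ℝ) + 1) * B ≤ z * A - ((k1 : ℝ) + 1) * B
    have : ((k1 : ℝ) + 1) ≤ ((k2 : ℝ) + 1) := by
      have := (Nat.cast_le (α := ℝ)).2 h; linarith
    nlinarith
  have hTneg : T < 0 := by
    by_cases hcase : 0 < g (k' + 1)
    · -- head is strictly positive, so T = S - H < 0
      have hHpos : 0 < H := by
        rw [hH]
        apply Finset.sum_pos
        · intro k hk
          have hk2 : k ≤ k' + 1 := by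
            have := Finset.mem_range.1 hk; omega
          have hgk : 0 < g k := lt_of_lt_of_le hcase (hgmono k (k' + 1) hk2)
          show 0 < (x ^ (n k) * y ^ ((k : ℝ) + 1))⁻¹ * g k
          have : 0 < (x ^ (n k) * y ^ ((k : ℝ) + 1))⁻¹ := by positivity
          exact mul_pos this hgk
        · exact Finset.nonempty_range_iff.2 (Nat.succ_ne_zero k')
      rw [hSn] at hS
      linarith [key1, hS, hHpos]
    · -- all tail terms nonpositive, one strictly negative
      push_neg at hcase
      have hneg : ∀ j : ℕ, F (j + (k' + 1)) ≤ 0 := by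
        intro j
        have hgj : g (j + (k' + 1)) ≤ 0 :=
          le_trans (hgmono (k' + 1) (j + (k' + 1)) (by omega)) hcase
        show (x ^ (n (j + (k' + 1))) * y ^ (((j + (k' + 1) : ℕ) : ℝ) + 1))⁻¹ * g (j + (k' + 1)) ≤ 0
        have hc : 0 ≤ (x ^ (n (j + (k' + 1))) * y ^ (((j + (k' + 1) : ℕ) : ℝ) + 1))⁻¹ := by positivity
        exact mul_nonpos_of_nonneg_of_nonpos hc hgj
      obtain ⟨N, hN⟩ := exists_nat_gt (z * A / B)
      have hstrict : F (N + (k' + 1)) < 0 := by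
        have hgN : g (N + (k' + 1)) < 0 := by
          show z * A - (((N + (k' + 1) : ℕ) : ℝ) + 1) * B < 0
          have hNN : (N : ℝ) ≤ ((N + (k' + 1) : ℕ) : ℝ) + 1 := by push_cast; linarith
          have h1 : z * A < N * B := by
            rwa [div_lt_iff₀ hBpos] at hN
          nlinarith
        show (x ^ (n (N + (k' + 1))) * y ^ (((N + (k' + 1) : ℕ) : ℝ) + 1))⁻¹ * g (N + (k' + 1)) < 0
        have hc : 0 < (x ^ (n (N + (k' + 1))) * y ^ (((N + (k' + 1) : ℕ) : ℝ) + 1))⁻¹ := by positivity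
        exact mul_neg_of_pos_of_neg hc hgN
      have hsumtail : Summable fun j : ℕ => F (j + (k' + 1)) :=
        (summable_nat_add_iff (k' + 1)).2 hFs
      have hpos : 0 < ∑' j : ℕ, -(F (j + (k' + 1))) :=
        Summable.tsum_pos hsumtail.neg (fun j => neg_nonneg.2 (hneg j)) N (by linarith [hstrict])
      rw [tsum_neg] at hpos
      rw [hT]; linarith
  rw [hSn, hSnh, ← key1, ← key2]
  nlinarith [hTneg, hxd]
end
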